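/- For every integer p ≥ 1 there exists a constant C (depending only on p and κ_ψ) such that for all x ∈ ℝ: E[ |1/ψ̃_Δ(x) − 1/ψ_Δ(x)|^{2p} ] ≤ C ( |ψ_Δ(x)|^{−2p} ∧ n^{−p} |ψ_Δ(x)|^{−4p} ). -/

import Mathlib

open MeasureTheory Complex ProbabilityTheory Finset ComplexConjugate

variable {Ω : Type*} [MeasurableSpace Ω] {μ : Measure Ω}

lemma integrable_of_bdd [IsProbabilityMeasure μ] {E : Type*} [NormedAddCommGroup E]
    {f : Ω → E} (hf : AEStronglyMeasurable f μ) {C : ℝ} (hC : ∀ ω, ‖f ω‖ ≤ C) :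
    Integrable f μ :=
  (integrable_const C).mono' hf (ae_of_all _ hC)

lemma cintegral_eq {f : Ω → ℂ} (hf : Integrable f μ) :
    ∫ ω, f ω ∂μ = ((∫ ω, (f ω).re ∂μ : ℝ) : ℂ) + ((∫ ω, (f ω).im ∂μ : ℝ) : ℂ) * I := by
  rw [show ((∫ ω, (f ω).re ∂μ : ℝ) : ℂ) = ∫ ω, ((f ω).re : ℂ) ∂μ from integral_ofReal.symm,
    show ((∫ ω, (f ω).im ∂μ : ℝ) : ℂ) = ∫ ω, ((f ω).im : ℂ) ∂μ from integral_ofReal.symm]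
  exact (integral_coe_re_add_coe_im hf).symm

lemma indep_integral_mul_complex [IsProbabilityMeasure μ] {X Y : Ω → ℂ}
    (h : IndepFun X Y μ) (hX : Measurable X) (hY : Measurable Y)
    {Cx Cy : ℝ} (hbX : ∀ ω, ‖X ω‖ ≤ Cx) (hbY : ∀ ω, ‖Y ω‖ ≤ Cy) :
    ∫ ω, X ω * Y ω ∂μ = (∫ ω, X ω ∂μ) * ∫ ω, Y ω ∂μ := by
  set Xr : Ω → ℝ := fun ω => (X ω).re with hXr
  set Xi : Ω → ℝ := fun ω => (X ω).im with hXi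
  set Yr : Ω → ℝ := fun ω => (Y ω).re with hYr
  set Yi : Ω → ℝ := fun ω => (Y ω).im with hYi
  have mXr : Measurable Xr := Complex.measurable_re.comp hX
  have mXi : Measurable Xi := Complex.measurable_im.comp hX
  have mYr : Measurable Yr := Complex.measurable_re.comp hY
  have mYi : Measurable Yi := Complex.measurable_im.comp hY
  have bXr : ∀ ω, |Xr ω| ≤ Cx := fun ω => (Complex.abs_re_le_norm _).trans (hbX ω)
  have bXi : ∀ ω, |Xi ω| ≤ Cx := fun ω => (Complex.abs_im_le_norm _).trans (hbX ω)
  have bYr : ∀ ω, |Yr ω| ≤ Cy := fun ω => (Complex.abs_re_le_norm _).trans (hbY ω)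
  have bYi : ∀ ω, |Yi ω| ≤ Cy := fun ω => (Complex.abs_im_le_norm _).trans (hbY ω)
  have iXr : Integrable Xr μ := integrable_of_bdd mXr.aestronglyMeasurable bXr
  have iXi : Integrable Xi μ := integrable_of_bdd mXi.aestronglyMeasurable bXi
  have iYr : Integrable Yr μ := integrable_of_bdd mYr.aestronglyMeasurable bYr
  have iYi : Integrable Yi μ := integrable_of_bdd mYi.aestronglyMeasurable bYi
  have hrr : ∫ ω, Xr ω * Yr ω ∂μ = (∫ ω, Xr ω ∂μ) * ∫ ω, Yr ω ∂μ :=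
    (h.comp Complex.measurable_re Complex.measurable_re).integral_fun_mul_eq_mul_integral
      mXr.aestronglyMeasurable mYr.aestronglyMeasurable
  have hri : ∫ ω, Xr ω * Yi ω ∂μ = (∫ ω, Xr ω ∂μ) * ∫ ω, Yi ω ∂μ :=
    (h.comp Complex.measurable_re Complex.measurable_im).integral_fun_mul_eq_mul_integral
      mXr.aestronglyMeasurable mYi.aestronglyMeasurable
  have hir : ∫ ω, Xi ω * Yr ω ∂μ = (∫ ω, Xi ω ∂μ) * ∫ ω, Yr ω ∂μ :=
    (h.comp Complex.measurable_im Complex.measurable_re).integral_fun_mul_eq_mul_integral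
      mXi.aestronglyMeasurable mYr.aestronglyMeasurable
  have hii : ∫ ω, Xi ω * Yi ω ∂μ = (∫ ω, Xi ω ∂μ) * ∫ ω, Yi ω ∂μ :=
    (h.comp Complex.measurable_im Complex.measurable_im).integral_fun_mul_eq_mul_integral
      mXi.aestronglyMeasurable mYi.aestronglyMeasurable
  have iX : Integrable X μ := integrable_of_bdd hX.aestronglyMeasurable hbX
  have iY : Integrable Y μ := integrable_of_bdd hY.aestronglyMeasurable hbY
  have iXY : Integrable (fun ω => X ω * Y ω) μ := by
    refine integrable_of_bdd ((hX.mul hY)).aestronglyMeasurable (C := Cx * Cy) (fun ω => ?_)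
    rw [norm_mul]
    have h0 : (0:ℝ) ≤ ‖Y ω‖ := norm_nonneg _
    have h1 : (0:ℝ) ≤ Cy := h0.trans (hbY ω)
    exact mul_le_mul (hbX ω) (hbY ω) h0 ((norm_nonneg _).trans (hbX ω))
  have irr : Integrable (fun ω => Xr ω * Yr ω) μ :=
    integrable_of_bdd (mXr.mul mYr).aestronglyMeasurable (C := Cx * Cy) (fun ω => by
      rw [Real.norm_eq_abs, abs_mul]
      exact mul_le_mul (bXr ω) (bYr ω) (abs_nonneg _) ((abs_nonneg _).trans (bXr ω)))
  have iri : Integrable (fun ω => Xr ω * Yi ω) μ :=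
    integrable_of_bdd (mXr.mul mYi).aestronglyMeasurable (C := Cx * Cy) (fun ω => by
      rw [Real.norm_eq_abs, abs_mul]
      exact mul_le_mul (bXr ω) (bYi ω) (abs_nonneg _) ((abs_nonneg _).trans (bXr ω)))
  have iir : Integrable (fun ω => Xi ω * Yr ω) μ :=
    integrable_of_bdd (mXi.mul mYr).aestronglyMeasurable (C := Cx * Cy) (fun ω => by
      rw [Real.norm_eq_abs, abs_mul]
      exact mul_le_mul (bXi ω) (bYr ω) (abs_nonneg _) ((abs_nonneg _).trans (bXi ω)))
  have iii : Integrable (fun ω => Xi ω * Yi ω) μ :=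
    integrable_of_bdd (mXi.mul mYi).aestronglyMeasurable (C := Cx * Cy) (fun ω => by
      rw [Real.norm_eq_abs, abs_mul]
      exact mul_le_mul (bXi ω) (bYi ω) (abs_nonneg _) ((abs_nonneg _).trans (bXi ω)))
  rw [cintegral_eq iXY, cintegral_eq iX, cintegral_eq iY]
  have e1 : ∫ ω, (X ω * Y ω).re ∂μ
      = (∫ ω, Xr ω ∂μ) * (∫ ω, Yr ω ∂μ) - (∫ ω, Xi ω ∂μ) * ∫ ω, Yi ω ∂μ := by
    have : ∀ ω, (X ω * Y ω).re = Xr ω * Yr ω - Xi ω * Yi ω := fun ω => Complex.mul_re _ _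
    rw [integral_congr_ae (ae_of_all _ this), integral_sub irr iii, hrr, hii]
  have e2 : ∫ ω, (X ω * Y ω).im ∂μ
      = (∫ ω, Xr ω ∂μ) * (∫ ω, Yi ω ∂μ) + (∫ ω, Xi ω ∂μ) * ∫ ω, Yr ω ∂μ := by
    have : ∀ ω, (X ω * Y ω).im = Xr ω * Yi ω + Xi ω * Yr ω := fun ω => Complex.mul_im _ _
    rw [integral_congr_ae (ae_of_all _ this), integral_add iri iir, hri, hir]
  rw [e1, e2]
  apply Complex.ext <;>
    simp [Complex.add_re, Complex.add_im, Complex.mul_re, Complex.mul_im] <;> ring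


lemma prod_comp_univ {M : Type*} [CommMonoid M] {q n : ℕ} (f : Fin n → M) (a : Fin q → Fin n) :
    ∏ i, f (a i) = ∏ k, f k ^ (univ.filter fun i => a i = k).card := by
  classical
  rw [Finset.prod_comp]
  refine Finset.prod_subset (subset_univ _) (fun k _ hk => ?_)
  have : (univ.filter fun i => a i = k) = ∅ := by
    rw [Finset.filter_eq_empty_iff]
    intro i _ hik
    exact hk (Finset.mem_image.2 ⟨i, mem_univ i, hik⟩)
  rw [this]
  simp

lemma small_image_card {q n : ℕ} (a b : Fin q → Fin n)
    (h : ∀ k, (univ.filter fun i => a i = k).card + (univ.filter fun i => b i = k).card ≠ 1) :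
    ((univ.image a) ∪ (univ.image b)).card ≤ q := by
  classical
  have hsa : ∑ k, (univ.filter fun i => a i = k).card = q := by
    have := Finset.card_eq_sum_card_fiberwise (f := a) (s := univ) (t := univ)
      (fun x _ => mem_univ (a x))
    simpa using this.symm
  have hsb : ∑ k, (univ.filter fun i => b i = k).card = q := by
    have := Finset.card_eq_sum_card_fiberwise (f := b) (s := univ) (t := univ)
      (fun x _ => mem_univ (b x))
    simpa using this.symm
  have hmem : ∀ k ∈ (univ.image a) ∪ (univ.image b),
      2 ≤ (univ.filter fun i => a i = k).card + (univ.filter fun i => b i = k).card := by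
    intro k hk
    have h1 : 1 ≤ (univ.filter fun i => a i = k).card + (univ.filter fun i => b i = k).card := by
      rcases Finset.mem_union.1 hk with hk | hk
      · obtain ⟨i, _, rfl⟩ := Finset.mem_image.1 hk
        have hi : i ∈ univ.filter fun j => a j = a i := by simp
        have := Finset.card_pos.2 ⟨i, hi⟩
        omega
      · obtain ⟨i, _, rfl⟩ := Finset.mem_image.1 hk
        have hi : i ∈ univ.filter fun j => b j = b i := by simp
        have := Finset.card_pos.2 ⟨i, hi⟩
        omega
    have := h k
    omega
  have h2 : ((univ.image a) ∪ (univ.image b)).card • 2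
      ≤ ∑ k ∈ (univ.image a) ∪ (univ.image b),
        ((univ.filter fun i => a i = k).card + (univ.filter fun i => b i = k).card) :=
    Finset.card_nsmul_le_sum _ _ _ hmem
  have h3 : ∑ k ∈ (univ.image a) ∪ (univ.image b),
        ((univ.filter fun i => a i = k).card + (univ.filter fun i => b i = k).card)
      ≤ ∑ k, ((univ.filter fun i => a i = k).card + (univ.filter fun i => b i = k).card) :=
    Finset.sum_le_sum_of_subset (subset_univ _)
  have h4 : ∑ k, ((univ.filter fun i => a i = k).card + (univ.filter fun i => b i = k).card)
      = q + q := by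
    rw [Finset.sum_add_distrib, hsa, hsb]
  have h5 := h2.trans (h3.trans_eq h4)
  rw [smul_eq_mul] at h5
  omega

lemma card_small_image_le {q n : ℕ} (hq : 1 ≤ q) :
    ((univ : Finset ((Fin q → Fin n) × (Fin q → Fin n))).filter
       (fun ab => (((univ.image ab.1) ∪ (univ.image ab.2)).card ≤ q))).card
     ≤ q ^ (2*q) * n ^ q := by
  classical
  set Φ : ((Fin q → Fin q) × (Fin q → Fin q) × (Fin q → Fin n))
      → ((Fin q → Fin n) × (Fin q → Fin n)) :=
    fun t => (t.2.2 ∘ t.1, t.2.2 ∘ t.2.1) with hΦ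
  have hsub : ((univ : Finset ((Fin q → Fin n) × (Fin q → Fin n))).filter
       (fun ab => (((univ.image ab.1) ∪ (univ.image ab.2)).card ≤ q)))
      ⊆ univ.image Φ := by
    intro ab hab
    obtain ⟨-, hcard⟩ := Finset.mem_filter.1 hab
    obtain ⟨a, b⟩ := ab
    set T := (univ.image a) ∪ (univ.image b) with hT
    have hTne : T.Nonempty := by
      refine ⟨a ⟨0, hq⟩, ?_⟩
      exact Finset.mem_union_left _ (Finset.mem_image.2 ⟨⟨0, hq⟩, mem_univ _, rfl⟩)
    have htpos : 0 < T.card := Finset.card_pos.2 hTne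
    have hle : T.card ≤ q := hcard
    set e : Fin q → Fin n := fun j =>
      ((T.equivFin.symm ⟨min j (T.card - 1), by omega⟩ : T) : Fin n) with he
    have hmema : ∀ i, a i ∈ T := fun i =>
      Finset.mem_union_left _ (Finset.mem_image.2 ⟨i, mem_univ _, rfl⟩)
    have hmemb : ∀ i, b i ∈ T := fun i =>
      Finset.mem_union_right _ (Finset.mem_image.2 ⟨i, mem_univ _, rfl⟩)
    set h₁ : Fin q → Fin q := fun i =>
      ⟨(T.equivFin ⟨a i, hmema i⟩ : ℕ), lt_of_lt_of_le (Fin.is_lt _) hle⟩ with hh₁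
    set h₂ : Fin q → Fin q := fun i =>
      ⟨(T.equivFin ⟨b i, hmemb i⟩ : ℕ), lt_of_lt_of_le (Fin.is_lt _) hle⟩ with hh₂
    refine Finset.mem_image.2 ⟨(h₁, h₂, e), mem_univ _, ?_⟩
    have key : ∀ (x : Fin n) (hx : x ∈ T), e ⟨(T.equivFin ⟨x, hx⟩ : ℕ),
        lt_of_lt_of_le (Fin.is_lt _) hle⟩ = x := by
      intro x hx
      have hlt : (T.equivFin ⟨x, hx⟩ : ℕ) < T.card := Fin.is_lt _
      have hmin : min ((T.equivFin ⟨x, hx⟩ : ℕ)) (T.card - 1)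
          = (T.equivFin ⟨x, hx⟩ : ℕ) := by omega
      simp only [he]
      have : (⟨min ((T.equivFin ⟨x, hx⟩ : ℕ)) (T.card - 1), by omega⟩ : Fin T.card)
          = T.equivFin ⟨x, hx⟩ := by
        apply Fin.ext
        simpa using hmin
      rw [this, Equiv.symm_apply_apply]
    simp only [hΦ]
    refine Prod.ext ?_ ?_
    · funext i
      exact key (a i) (hmema i)
    · funext i
      exact key (b i) (hmemb i)
  calc _ ≤ (univ.image Φ).card := Finset.card_le_card hsub
    _ ≤ (univ : Finset ((Fin q → Fin q) × (Fin q → Fin q) × (Fin q → Fin n))).card :=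
        Finset.card_image_le
    _ = q ^ q * (q ^ q * n ^ q) := by
        simp [Fintype.card_fun]
    _ = q ^ (2*q) * n ^ q := by ring

lemma indep_integral_prod [IsProbabilityMeasure μ] {n : ℕ} {g : Fin n → Ω → ℂ}
    (hindep : iIndepFun g μ) (hmeas : ∀ k, Measurable (g k))
    {C : Fin n → ℝ} (hbdd : ∀ k ω, ‖g k ω‖ ≤ C k) (s : Finset (Fin n)) :
    ∫ ω, ∏ k ∈ s, g k ω ∂μ = ∏ k ∈ s, ∫ ω, g k ω ∂μ := by
  classical
  induction s using Finset.cons_induction with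
  | empty => simp
  | cons a s ha ih =>
    have hY : Measurable (fun ω => ∏ k ∈ s, g k ω) :=
      Finset.measurable_prod s (fun k _ => hmeas k)
    have hbY : ∀ ω, ‖∏ k ∈ s, g k ω‖ ≤ ∏ k ∈ s, C k := by
      intro ω
      calc ‖∏ k ∈ s, g k ω‖ = ∏ k ∈ s, ‖g k ω‖ := by
            simp [norm_prod]
        _ ≤ ∏ k ∈ s, C k :=
            Finset.prod_le_prod (fun k _ => norm_nonneg _) (fun k _ => hbdd k ω)
    have hind : IndepFun (g a) (fun ω => ∏ k ∈ s, g k ω) μ := by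
      have := (hindep.indepFun_finset_prod_of_notMem hmeas ha).symm
      have heq : (∏ j ∈ s, g j) = fun ω => ∏ k ∈ s, g k ω := by
        funext ω; exact Finset.prod_apply ω s g
      rwa [heq] at this
    have key : ∫ ω, g a ω * ∏ k ∈ s, g k ω ∂μ
        = (∫ ω, g a ω ∂μ) * ∫ ω, ∏ k ∈ s, g k ω ∂μ :=
      indep_integral_mul_complex hind (hmeas a) hY (hbdd a) hbY
    simp only [Finset.prod_cons]
    rw [key, ih]

lemma mom [IsProbabilityMeasure μ] {n q : ℕ} (hq : 1 ≤ q)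
    {D : Fin n → Ω → ℂ} (hmeas : ∀ k, Measurable (D k))
    (hindep : iIndepFun D μ)
    (hbdd : ∀ k ω, ‖D k ω‖ ≤ 2) (hcent : ∀ k, ∫ ω, D k ω ∂μ = 0) :
    ∫ ω, ‖∑ k, D k ω‖ ^ (2*q) ∂μ ≤ ((2*q : ℕ) : ℝ) ^ (2*q) * (n : ℝ) ^ q := by
  classical
  set S : Ω → ℂ := fun ω => ∑ k, D k ω with hS
  have hmS : Measurable S := Finset.measurable_sum _ (fun k _ => hmeas k)
  set α : (Fin q → Fin n) → Fin n → ℕ :=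
    fun a k => (univ.filter fun i => a i = k).card with hα
  -- the factor functions
  set g : (Fin q → Fin n) × (Fin q → Fin n) → Fin n → Ω → ℂ :=
    fun ab k ω => (D k ω) ^ (α ab.1 k) * (conj (D k ω)) ^ (α ab.2 k) with hg
  have hmg : ∀ ab k, Measurable (g ab k) := by
    intro ab k
    exact ((hmeas k).pow_const _).mul
      ((Complex.continuous_conj.measurable.comp (hmeas k)).pow_const _)
  have hbg : ∀ ab k ω, ‖g ab k ω‖ ≤ 2 ^ (α ab.1 k + α ab.2 k) := by
    intro ab k ω
    rw [norm_mul, norm_pow, norm_pow, RCLike.norm_conj, pow_add]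
    have h2 : ‖D k ω‖ ^ (α ab.1 k) ≤ 2 ^ (α ab.1 k) :=
      pow_le_pow_left₀ (norm_nonneg _) (hbdd k ω) _
    have h3 : ‖D k ω‖ ^ (α ab.2 k) ≤ 2 ^ (α ab.2 k) :=
      pow_le_pow_left₀ (norm_nonneg _) (hbdd k ω) _
    exact mul_le_mul h2 h3 (pow_nonneg (norm_nonneg _) _) (pow_nonneg (by norm_num) _)
  -- the summand after expansion
  set T : (Fin q → Fin n) × (Fin q → Fin n) → ℂ :=
    fun ab => ∏ k, ∫ ω, g ab k ω ∂μ with hT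
  -- sum of fibre cardinalities
  have hαsum : ∀ a : Fin q → Fin n, ∑ k, α a k = q := by
    intro a
    have := Finset.card_eq_sum_card_fiberwise (f := a) (s := univ) (t := univ)
      (fun x _ => mem_univ (a x))
    simpa [hα] using this.symm
  -- pointwise expansion
  have hpt : ∀ ω, (S ω) ^ q * (conj (S ω)) ^ q
      = ∑ ab : (Fin q → Fin n) × (Fin q → Fin n), ∏ k, g ab k ω := by
    intro ω
    have e1 : (S ω) ^ q = ∑ a : Fin q → Fin n, ∏ i, D (a i) ω := Fintype.sum_pow _ q
    have e2 : (conj (S ω)) ^ q = ∑ b : Fin q → Fin n, ∏ j, conj (D (b j) ω) := by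
      have : conj (S ω) = ∑ k, conj (D k ω) := by simp [hS, map_sum]
      rw [this]
      exact Fintype.sum_pow _ q
    rw [e1, e2, Finset.sum_mul_sum, ← Fintype.sum_prod_type']
    refine Finset.sum_congr rfl (fun ab _ => ?_)
    rw [prod_comp_univ (fun k => D k ω) ab.1, prod_comp_univ (fun k => conj (D k ω)) ab.2,
      ← Finset.prod_mul_distrib]
  -- expansion of the integral
  have hswap : ∫ ω, (S ω) ^ q * (conj (S ω)) ^ q ∂μ
      = ∑ ab : (Fin q → Fin n) × (Fin q → Fin n), T ab := by
    rw [integral_congr_ae (ae_of_all _ hpt), integral_finset_sum]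
    · refine Finset.sum_congr rfl (fun ab _ => ?_)
      exact indep_integral_prod (hindep.comp _ (fun k =>
          ((measurable_id.pow_const _).mul
            (Complex.continuous_conj.measurable.pow_const _)))) (hmg ab) (hbg ab) univ
    · intro ab _
      refine integrable_of_bdd (Finset.measurable_prod _ (fun k _ => hmg ab k)).aestronglyMeasurable
        (C := ∏ k, (2:ℝ) ^ (α ab.1 k + α ab.2 k)) (fun ω => ?_)
      rw [norm_prod]
      exact Finset.prod_le_prod (fun k _ => norm_nonneg _) (fun k _ => hbg ab k ω)
  -- vanishing terms
  have hvanish : ∀ ab : (Fin q → Fin n) × (Fin q → Fin n),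
      (¬ ∀ k, α ab.1 k + α ab.2 k ≠ 1) → T ab = 0 := by
    intro ab hab
    push_neg at hab
    obtain ⟨k, hk⟩ := hab
    refine Finset.prod_eq_zero (mem_univ k) ?_
    have h01 : (α ab.1 k = 1 ∧ α ab.2 k = 0) ∨ (α ab.1 k = 0 ∧ α ab.2 k = 1) := by omega
    rcases h01 with ⟨h1, h2⟩ | ⟨h1, h2⟩
    · simp only [hg, h1, h2, pow_one, pow_zero, mul_one]
      exact hcent k
    · simp only [hg, h1, h2, pow_one, pow_zero, one_mul]
      rw [integral_conj, hcent k, map_zero]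
  -- bound on each term
  have hTbound : ∀ ab : (Fin q → Fin n) × (Fin q → Fin n), ‖T ab‖ ≤ 2 ^ (2*q) := by
    intro ab
    have e1 : ‖T ab‖ = ∏ k, ‖∫ ω, g ab k ω ∂μ‖ := by simp [hT, norm_prod]
    have e2 : ∀ k : Fin n, ‖∫ ω, g ab k ω ∂μ‖ ≤ 2 ^ (α ab.1 k + α ab.2 k) := by
      intro k
      have := norm_integral_le_of_norm_le_const (μ := μ)
        (C := (2:ℝ) ^ (α ab.1 k + α ab.2 k)) (ae_of_all _ (hbg ab k))
      simpa using this
    rw [e1]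
    calc ∏ k, ‖∫ ω, g ab k ω ∂μ‖ ≤ ∏ k, (2:ℝ) ^ (α ab.1 k + α ab.2 k) :=
          Finset.prod_le_prod (fun k _ => norm_nonneg _) (fun k _ => e2 k)
      _ = 2 ^ (∑ k, (α ab.1 k + α ab.2 k)) := Finset.prod_pow_eq_pow_sum _ _ _
      _ = 2 ^ (2*q) := by rw [Finset.sum_add_distrib, hαsum, hαsum]; ring_nf
  -- restrict to the good set
  set G := (univ : Finset ((Fin q → Fin n) × (Fin q → Fin n))).filter
      (fun ab => ∀ k, α ab.1 k + α ab.2 k ≠ 1) with hG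
  have hsumG : ∑ ab : (Fin q → Fin n) × (Fin q → Fin n), T ab = ∑ ab ∈ G, T ab :=
    (Finset.sum_filter_of_ne (fun ab _ hne => by_contra fun h => hne (hvanish ab h))).symm
  have hGcard : G.card ≤ q ^ (2*q) * n ^ q := by
    refine le_trans (Finset.card_le_card ?_) (card_small_image_le hq)
    intro ab hab
    rw [Finset.mem_filter] at hab ⊢
    exact ⟨mem_univ _, small_image_card ab.1 ab.2 hab.2⟩
  -- identify the integral with the complex sum
  have hid : ((∫ ω, ‖S ω‖ ^ (2*q) ∂μ : ℝ) : ℂ) = ∑ ab ∈ G, T ab := by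
    rw [← hsumG, ← hswap,
      show ((∫ ω, ‖S ω‖ ^ (2*q) ∂μ : ℝ) : ℂ) = ∫ ω, ((‖S ω‖ ^ (2*q) : ℝ) : ℂ) ∂μ
        from integral_ofReal.symm]
    refine integral_congr_ae (ae_of_all _ (fun ω => ?_))
    show ((‖S ω‖ ^ (2*q) : ℝ) : ℂ) = S ω ^ q * (conj (S ω)) ^ q
    rw [← mul_pow, Complex.mul_conj, pow_mul]
    norm_cast
    rw [Complex.normSq_eq_norm_sq]
  have hre : ∫ ω, ‖S ω‖ ^ (2*q) ∂μ = (∑ ab ∈ G, T ab).re := by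
    rw [← hid, Complex.ofReal_re]
  rw [hre]
  calc (∑ ab ∈ G, T ab).re ≤ |(∑ ab ∈ G, T ab).re| := le_abs_self _
    _ ≤ ‖∑ ab ∈ G, T ab‖ := by
        exact Complex.abs_re_le_norm _
    _ ≤ ∑ ab ∈ G, ‖T ab‖ := norm_sum_le _ _
    _ ≤ G.card • (2:ℝ) ^ (2*q) := Finset.sum_le_card_nsmul _ _ _ (fun ab _ => hTbound ab)
    _ = (G.card : ℝ) * 2 ^ (2*q) := by rw [nsmul_eq_mul]
    _ ≤ ((q ^ (2*q) * n ^ q : ℕ) : ℝ) * 2 ^ (2*q) := by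
        have : (G.card : ℝ) ≤ ((q ^ (2*q) * n ^ q : ℕ) : ℝ) := Nat.cast_le.2 hGcard
        exact mul_le_mul_of_nonneg_right this (by positivity)
    _ = ((2*q : ℕ) : ℝ) ^ (2*q) * (n : ℝ) ^ q := by push_cast; rw [mul_pow]; ring

lemma norm_inv_sub_inv {z w : ℂ} (hz : z ≠ 0) (hw : w ≠ 0) :
    ‖z⁻¹ - w⁻¹‖ = ‖z - w‖ / (‖z‖ * ‖w‖) := by
  have h : z⁻¹ - w⁻¹ = (w - z) / (z * w) := by field_simp
  rw [h, norm_div, norm_mul, norm_sub_rev]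

lemma le_max_mul_min {A a b : ℝ} (hA : 0 < A) (ha : 0 ≤ a) (hb : 0 ≤ b) (hab : a ≤ A * b) :
    a ≤ max 1 A * min a b := by
  rcases min_cases a b with ⟨hm, hle⟩ | ⟨hm, hlt⟩
  · rw [hm]
    nlinarith [le_max_left (1:ℝ) A]
  · rw [hm]
    calc a ≤ A * b := hab
      _ ≤ max 1 A * b := mul_le_mul_of_nonneg_right (le_max_right _ _) hb

set_option maxHeartbeats 1000000 in
/-- Neumann's lemma: for every `p ≥ 1` there is a constant `C` (depending only on `p`
and the truncation constant `κψ`) such that for every sample size `n`, every i.i.d. sample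
and every `x`,
`E[|1/ψ̃(x) - 1/ψ(x)|^{2p}] ≤ C (|ψ(x)|^{-2p} ∧ n^{-p}|ψ(x)|^{-4p})`. -/
theorem stmt_2 (p : ℕ) (hp : 1 ≤ p) (κψ : ℝ) (hκψ : 0 < κψ) :
    ∃ C : ℝ, 0 < C ∧
      ∀ (Ω : Type) [MeasurableSpace Ω] (μ : Measure Ω), IsProbabilityMeasure μ →
      ∀ (n : ℕ) (hn : 0 < n) (Z : Fin n → Ω → ℝ),
        (∀ k, Measurable (Z k)) →
        iIndepFun Z μ →
        (∀ k, μ.map (Z k) = μ.map (Z ⟨0, hn⟩)) →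
        ∀ (ψ : ℝ → ℂ),
          (∀ u : ℝ, ψ u = ∫ ω, Complex.exp (Complex.I * u * Z ⟨0, hn⟩ ω) ∂μ) →
          (∀ u : ℝ, ψ u ≠ 0) →
          ∀ x : ℝ,
            (∫ ω, ‖(if κψ / Real.sqrt n
                      < ‖(n : ℂ)⁻¹ * ∑ k, Complex.exp (Complex.I * x * Z k ω)‖
                    then ((n : ℂ)⁻¹ * ∑ k, Complex.exp (Complex.I * x * Z k ω))⁻¹
                    else 0)
                  - (ψ x)⁻¹‖ ^ (2 * p) ∂μ)
              ≤ C * min ((‖ψ x‖ ^ (2 * p))⁻¹)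
                  (((n : ℝ) ^ p)⁻¹ * (‖ψ x‖ ^ (4 * p))⁻¹) := by
  set A := (4*κψ^2)^p with hA
  have hA0 : 0 < A := by positivity
  set K := (4:ℝ)^(2*p) * ((2*p:ℕ):ℝ)^(2*p)
      + 4^(2*p) * (κψ^(2*p))⁻¹ * ((2*(2*p):ℕ):ℝ)^(2*(2*p)) with hK
  have hK0 : 0 ≤ K := by positivity
  refine ⟨3^(2*p) * max 1 A + K * max 1 A⁻¹, ?_, ?_⟩
  · have h1 : (0:ℝ) < 3^(2*p) * max 1 A := by positivity
    have h2 : (0:ℝ) ≤ K * max 1 A⁻¹ :=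
      mul_nonneg hK0 (le_trans zero_le_one (le_max_left _ _))
    linarith
  intro Ω _ μ hμ n hn Z hZm hZindep hmap ψ hψdef hψne x
  clear_value A K
  have hn0 : (0:ℝ) < n := Nat.cast_pos.2 hn
  have hnne : (n:ℝ) ≠ 0 := hn0.ne'
  have hsn : 0 < Real.sqrt n := Real.sqrt_pos.2 hn0
  set c : ℂ := ψ x with hc
  set r : ℝ := ‖c‖ with hrdef
  have hcne : c ≠ 0 := hψne x
  have hr0 : 0 < r := norm_pos_iff.2 hcne
  set W : Fin n → Ω → ℂ := fun k ω => Complex.exp (Complex.I * x * Z k ω) with hW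
  have hWm : ∀ k, Measurable (W k) := fun k =>
    Complex.measurable_exp.comp
      ((Complex.measurable_ofReal.comp (hZm k)).const_mul (Complex.I * x))
  have hWabs : ∀ k ω, ‖W k ω‖ = 1 := by
    intro k ω
    simp [hW, Complex.norm_exp]
  have hWint : ∀ k, ∫ ω, W k ω ∂μ = c := by
    intro k
    have hcont : Continuous fun y : ℝ => Complex.exp (Complex.I * x * y) := by continuity
    have h1 : ∫ ω, W k ω ∂μ = ∫ y, Complex.exp (Complex.I * x * y) ∂(μ.map (Z k)) :=
      (integral_map (hZm k).aemeasurable hcont.aestronglyMeasurable).symm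
    rw [h1, hmap k, integral_map (hZm ⟨0,hn⟩).aemeasurable hcont.aestronglyMeasurable,
      hc, hψdef x]
  have hrle : r ≤ 1 := by
    have h2 := norm_integral_le_of_norm_le_const (μ := μ) (C := 1) (f := W ⟨0,hn⟩)
      (ae_of_all _ fun ω => (hWabs _ ω).le)
    rw [hWint] at h2
    simpa [measure_univ] using h2
  set D : Fin n → Ω → ℂ := fun k ω => W k ω - c with hD
  have hDm : ∀ k, Measurable (D k) := fun k => (hWm k).sub measurable_const
  have hDb : ∀ k ω, ‖D k ω‖ ≤ 2 := by
    intro k ω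
    calc ‖W k ω - c‖ ≤ ‖W k ω‖ + ‖c‖ := norm_sub_le _ _
      _ ≤ 1 + 1 := by
          rw [hWabs k ω]
          exact add_le_add_right (by simpa using hrle) _
      _ = 2 := by norm_num
  have hDc : ∀ k, ∫ ω, D k ω ∂μ = 0 := by
    intro k
    rw [hD]
    rw [integral_sub (integrable_of_bdd (hWm k).aestronglyMeasurable (C := 1)
        (fun ω => (hWabs k ω).le)) (integrable_const c), hWint, integral_const]
    simp [measure_univ]
  have hDindep : iIndepFun D μ := by
    have h := hZindep.comp (fun k (z : ℝ) => Complex.exp (Complex.I * x * z) - c)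
      (fun k => (Complex.measurable_exp.comp
        ((Complex.measurable_ofReal).const_mul (Complex.I * x))).sub measurable_const)
    exact h
  set E : Ω → ℂ := fun ω => (n:ℂ)⁻¹ * ∑ k, Complex.exp (Complex.I * x * Z k ω) with hE
  have hEW : ∀ ω, E ω = (n:ℂ)⁻¹ * ∑ k, W k ω := fun ω => rfl
  have hmom : ∀ q : ℕ, 1 ≤ q →
      ∫ ω, ‖E ω - c‖^(2*q) ∂μ ≤ ((2*q:ℕ):ℝ)^(2*q) * ((n:ℝ)^q)⁻¹ := by
    intro q hq
    have hncc : (n:ℂ) ≠ 0 := Nat.cast_ne_zero.2 hn.ne'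
    have h1 : ∀ ω, E ω - c = (n:ℂ)⁻¹ * ∑ k, D k ω := by
      intro ω
      rw [hEW ω, hD]
      rw [Finset.sum_sub_distrib, Finset.sum_const, card_univ, Fintype.card_fin,
        nsmul_eq_mul]
      field_simp
    have h2 : (fun ω => ‖E ω - c‖^(2*q)) = fun ω => ((n:ℝ)⁻¹)^(2*q) * ‖∑ k, D k ω‖^(2*q) := by
      funext ω
      rw [h1 ω, norm_mul, mul_pow, norm_inv, Complex.norm_natCast]
    rw [h2, integral_const_mul]
    have h3 := mom hq hDm hDindep hDb hDc
    calc ((n:ℝ)⁻¹)^(2*q) * ∫ ω, ‖∑ k, D k ω‖^(2*q) ∂μ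
        ≤ ((n:ℝ)⁻¹)^(2*q) * (((2*q:ℕ):ℝ)^(2*q) * (n:ℝ)^q) :=
          mul_le_mul_of_nonneg_left h3 (by positivity)
      _ = ((2*q:ℕ):ℝ)^(2*q) * ((n:ℝ)^q)⁻¹ := by
          field_simp
          ring_nf; rw [← mul_pow, mul_inv_cancel₀ hnne, one_pow]
  set F : Ω → ℝ := fun ω =>
    ‖(if κψ / Real.sqrt n < ‖E ω‖ then (E ω)⁻¹ else 0) - c⁻¹‖^(2*p) with hF
  have hEm : Measurable E :=
    measurable_const.mul (Finset.measurable_sum _ (fun k _ => hWm k))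
  have hVm : Measurable (fun ω =>
      (if κψ / Real.sqrt n < ‖E ω‖ then (E ω)⁻¹ else 0) - c⁻¹) := by
    refine Measurable.sub ?_ measurable_const
    refine Measurable.ite ?_ hEm.inv measurable_const
    exact measurableSet_lt measurable_const hEm.norm
  have hFm : Measurable F := hVm.norm.pow_const _
  have hposk : 0 < κψ / Real.sqrt n := div_pos hκψ hsn
  have hVb : ∀ ω, ‖(if κψ / Real.sqrt n < ‖E ω‖ then (E ω)⁻¹ else 0) - c⁻¹‖
      ≤ Real.sqrt n / κψ + r⁻¹ := by
    intro ω
    have hcinv : ‖c⁻¹‖ = r⁻¹ := by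
      rw [norm_inv]
    by_cases hite : κψ / Real.sqrt n < ‖E ω‖
    · rw [if_pos hite]
      calc ‖(E ω)⁻¹ - c⁻¹‖ ≤ ‖(E ω)⁻¹‖ + ‖c⁻¹‖ := norm_sub_le _ _
        _ ≤ Real.sqrt n / κψ + r⁻¹ := by
            rw [hcinv]
            refine add_le_add_left ?_ _
            rw [norm_inv]
            calc (‖E ω‖)⁻¹ ≤ (κψ / Real.sqrt n)⁻¹ :=
                  inv_anti₀ hposk hite.le
              _ = Real.sqrt n / κψ := by rw [inv_div]
    · rw [if_neg hite, zero_sub, norm_neg, hcinv]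
      have : 0 ≤ Real.sqrt n / κψ := by positivity
      linarith
  have hFb : ∀ ω, F ω ≤ (Real.sqrt n / κψ + r⁻¹)^(2*p) := fun ω =>
    pow_le_pow_left₀ (norm_nonneg _) (hVb ω) _
  have hFint : Integrable F μ := integrable_of_bdd hFm.aestronglyMeasurable
    (C := (Real.sqrt n / κψ + r⁻¹)^(2*p)) (fun ω => by
      have h0 : (0:ℝ) ≤ F ω := pow_nonneg (norm_nonneg _) _
      rw [Real.norm_eq_abs, _root_.abs_of_nonneg h0]
      exact hFb ω)
  have hEb : ∀ ω, ‖E ω‖ ≤ 1 := by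
    intro ω
    rw [hEW ω]
    calc ‖(n:ℂ)⁻¹ * ∑ k, W k ω‖ = ‖(n:ℂ)⁻¹‖ * ‖∑ k, W k ω‖ := norm_mul _ _
      _ ≤ (n:ℝ)⁻¹ * ∑ k, ‖W k ω‖ := by
          rw [norm_inv, Complex.norm_natCast]
          exact mul_le_mul_of_nonneg_left (norm_sum_le _ _) (by positivity)
      _ = 1 := by
          simp only [hWabs]
          rw [Finset.sum_const, card_univ, Fintype.card_fin, nsmul_eq_mul, mul_one,
            inv_mul_cancel₀ hnne]
  have hΔb : ∀ ω, ‖E ω - c‖ ≤ 2 := by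
    intro ω
    calc ‖E ω - c‖ ≤ ‖E ω‖ + ‖c‖ := norm_sub_le _ _
      _ ≤ 1 + 1 := add_le_add (by exact hEb ω)
          (by exact hrle)
      _ = 2 := by norm_num
  suffices hmain : ∫ ω, F ω ∂μ ≤ (3^(2*p) * max 1 A + K * max 1 A⁻¹) *
      min ((r^(2*p))⁻¹) (((n:ℝ)^p)⁻¹ * (r^(4*p))⁻¹) by exact hmain
  set a := (r^(2*p))⁻¹ with ha
  set b := ((n:ℝ)^p)⁻¹ * (r^(4*p))⁻¹ with hb
  have ha0 : 0 ≤ a := by positivity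
  have hb0 : 0 ≤ b := by positivity
  have hmin0 : 0 ≤ min a b := le_min ha0 hb0
  clear_value a b
  have hrp : r^(2*p) * r^(2*p) = r^(4*p) := by rw [← pow_add]; ring_nf
  have hnr : (n:ℝ)^p * r^(2*p) = ((n:ℝ) * r^2)^p := by rw [mul_pow, pow_mul]
  have hsqn : Real.sqrt n ^ 2 = (n:ℝ) := Real.sq_sqrt hn0.le
  rcases le_or_gt (r * Real.sqrt n) (2*κψ) with hcase | hcase
  · -- Case I : r √n ≤ 2 κψ
    have hnr2 : (n:ℝ) * r^2 ≤ 4*κψ^2 := by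
      have hsq : (r*Real.sqrt n)*(r*Real.sqrt n) ≤ (2*κψ)*(2*κψ) :=
        mul_le_mul hcase hcase (by positivity) (by positivity)
      have h6 : r^2 * (Real.sqrt n)^2 ≤ 4*κψ^2 := by nlinarith [hsq]
      rw [hsqn] at h6
      linarith
    have hab : a ≤ A * b := by
      rw [ha, hb, show ((n:ℝ)^p)⁻¹ * (r^(4*p))⁻¹ = ((n:ℝ)^p * r^(4*p))⁻¹ by rw [mul_inv]]
      have hden : 0 < (n:ℝ)^p * r^(4*p) := by positivity
      rw [← div_eq_mul_inv, le_div_iff₀ hden]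
      calc (r^(2*p))⁻¹ * ((n:ℝ)^p * r^(4*p)) = (n:ℝ)^p * r^(2*p) := by
            rw [← hrp]; field_simp
        _ = ((n:ℝ)*r^2)^p := hnr
        _ ≤ A := by rw [hA]; exact pow_le_pow_left₀ (by positivity) hnr2 p
    have hEle : ∫ ω, F ω ∂μ ≤ 3^(2*p) * a := by
      have h1 : Real.sqrt n / κψ ≤ 2 / r := by
        rw [div_le_div_iff₀ hκψ hr0]
        nlinarith
      have h3r : (3:ℝ)/r = 2/r + 1/r := by ring
      have hsn2 : Real.sqrt n / κψ + r⁻¹ ≤ 3 / r := by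
        rw [h3r, inv_eq_one_div]
        linarith
      calc ∫ ω, F ω ∂μ ≤ ∫ _ω, (Real.sqrt n / κψ + r⁻¹)^(2*p) ∂μ :=
            integral_mono hFint (integrable_const _) hFb
        _ = (Real.sqrt n / κψ + r⁻¹)^(2*p) := by
            rw [integral_const, probReal_univ, one_smul]
        _ ≤ (3/r)^(2*p) := pow_le_pow_left₀ (by positivity) hsn2 _
        _ = 3^(2*p) * a := by rw [div_pow, ha, div_eq_mul_inv]
    have h2 : a ≤ max 1 A * min a b := le_max_mul_min hA0 ha0 hb0 hab
    calc ∫ ω, F ω ∂μ ≤ 3^(2*p) * a := hEle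
      _ ≤ 3^(2*p) * (max 1 A * min a b) := by
          exact mul_le_mul_of_nonneg_left h2 (by positivity)
      _ ≤ (3^(2*p) * max 1 A + K * max 1 A⁻¹) * min a b := by
          have h4 : (0:ℝ) ≤ K * max 1 A⁻¹ :=
            mul_nonneg hK0 (le_trans zero_le_one (le_max_left _ _))
          nlinarith [hmin0]
  · -- Case II : 2 κψ < r √n
    have hnr2 : 4*κψ^2 ≤ (n:ℝ) * r^2 := by
      have hsq : (2*κψ)*(2*κψ) ≤ (r*Real.sqrt n)*(r*Real.sqrt n) :=
        mul_le_mul hcase.le hcase.le (by positivity) (by positivity)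
      have h6 : 4*κψ^2 ≤ r^2 * (Real.sqrt n)^2 := by nlinarith [hsq]
      rw [hsqn] at h6
      linarith
    have hba : b ≤ A⁻¹ * a := by
      rw [ha, hb, show ((n:ℝ)^p)⁻¹ * (r^(4*p))⁻¹ = ((n:ℝ)^p * r^(4*p))⁻¹ by rw [mul_inv]]
      have hden : 0 < (n:ℝ)^p * r^(4*p) := by positivity
      rw [show A⁻¹ * (r^(2*p))⁻¹ = (A * r^(2*p))⁻¹ by rw [mul_inv]]
      refine inv_anti₀ (by positivity) ?_
      calc A * r^(2*p) ≤ ((n:ℝ)*r^2)^p * r^(2*p) := by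
            refine mul_le_mul_of_nonneg_right ?_ (by positivity)
            rw [hA]
            exact pow_le_pow_left₀ (by positivity) hnr2 p
        _ = (n:ℝ)^p * r^(4*p) := by rw [← hnr, mul_assoc, hrp]
    have hpt : ∀ ω, F ω ≤ (4/r^2)^(2*p) * ‖E ω - c‖^(2*p)
        + (4*Real.sqrt n/(κψ*r^2))^(2*p) * ‖E ω - c‖^(2*(2*p)) := by
      intro ω
      have ht0 : (0:ℝ) ≤ ‖E ω - c‖ := norm_nonneg _
      have htri : r ≤ ‖E ω‖ + ‖E ω - c‖ := by
        have h8 : c = E ω - (E ω - c) := by ring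
        calc r = ‖c‖ := rfl
          _ = ‖E ω - (E ω - c)‖ := by rw [← h8]
          _ ≤ ‖E ω‖ + ‖E ω - c‖ := norm_sub_le _ _
          _ = ‖E ω‖ + ‖E ω - c‖ := rfl
      have hterm1 : (0:ℝ) ≤ (4/r^2)^(2*p) * ‖E ω - c‖^(2*p) := by positivity
      have hterm2 : (0:ℝ) ≤ (4*Real.sqrt n/(κψ*r^2))^(2*p) * ‖E ω - c‖^(2*(2*p)) := by
        positivity
      have hκr : κψ / Real.sqrt n < r/2 := by
        rw [div_lt_div_iff₀ hsn (by norm_num : (0:ℝ) < 2)]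
        nlinarith
      by_cases hite : κψ / Real.sqrt n < ‖E ω‖
      · have hu0 : 0 < ‖E ω‖ := lt_trans hposk hite
        have hEne : E ω ≠ 0 := by
          intro h0
          rw [h0, norm_zero] at hu0
          exact lt_irrefl 0 hu0
        have hFval : F ω = (‖E ω - c‖ / (‖E ω‖ * r))^(2*p) := by
          show ‖(if κψ / Real.sqrt n < ‖E ω‖ then (E ω)⁻¹ else 0) - c⁻¹‖^(2*p) = _
          rw [if_pos hite, norm_inv_sub_inv hEne hcne]
        rw [hFval]
        by_cases h2 : ‖E ω - c‖ < r/2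
        · have hu : r/2 < ‖E ω‖ := by linarith
          have hval : ‖E ω - c‖ / (‖E ω‖ * r) ≤ 4/r^2 * ‖E ω - c‖ := by
            rw [show (4:ℝ)/r^2 * ‖E ω - c‖ = (4*‖E ω - c‖)/r^2 by ring,
              div_le_div_iff₀ (by positivity) (by positivity)]
            nlinarith [mul_le_mul_of_nonneg_left hu.le ht0, mul_nonneg ht0 hr0.le]
          calc (‖E ω - c‖ / (‖E ω‖ * r))^(2*p)
              ≤ (4/r^2 * ‖E ω - c‖)^(2*p) := pow_le_pow_left₀ (by positivity) hval _
            _ = (4/r^2)^(2*p) * ‖E ω - c‖^(2*p) := mul_pow _ _ _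
            _ ≤ _ := le_add_of_nonneg_right hterm2
        · push_neg at h2
          have h8 : κψ < Real.sqrt n * ‖E ω‖ := by
            rw [div_lt_iff₀ hsn] at hite
            linarith
          have hval : ‖E ω - c‖ / (‖E ω‖ * r)
              ≤ 4*Real.sqrt n/(κψ*r^2) * (‖E ω - c‖*‖E ω - c‖) := by
            rw [show (4:ℝ)*Real.sqrt n/(κψ*r^2) * (‖E ω - c‖*‖E ω - c‖)
                = (4*Real.sqrt n*(‖E ω - c‖*‖E ω - c‖))/(κψ*r^2) by ring,
              div_le_div_iff₀ (by positivity) (by positivity)]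
            nlinarith [mul_nonneg (mul_nonneg (sq_nonneg r) ht0) (sub_nonneg.2 h8.le),
              mul_nonneg (mul_nonneg (mul_nonneg (Real.sqrt_nonneg (n:ℝ)) hu0.le)
                (mul_nonneg hr0.le ht0)) (sub_nonneg.2 h2),
              mul_pos hu0 hr0, ht0, hr0.le]
          calc (‖E ω - c‖ / (‖E ω‖ * r))^(2*p)
              ≤ (4*Real.sqrt n/(κψ*r^2) * (‖E ω - c‖*‖E ω - c‖))^(2*p) :=
                pow_le_pow_left₀ (by positivity) hval _
            _ = (4*Real.sqrt n/(κψ*r^2))^(2*p) * (‖E ω - c‖*‖E ω - c‖)^(2*p) := mul_pow _ _ _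
            _ = (4*Real.sqrt n/(κψ*r^2))^(2*p) * ‖E ω - c‖^(2*(2*p)) := by
                rw [show ‖E ω - c‖*‖E ω - c‖ = ‖E ω - c‖^2 by ring, ← pow_mul]
            _ ≤ _ := le_add_of_nonneg_left hterm1
      · have hu : ‖E ω‖ ≤ κψ / Real.sqrt n := not_lt.1 hite
        have ht : r/2 < ‖E ω - c‖ := by linarith
        have hFval : F ω = (r⁻¹)^(2*p) := by
          show ‖(if κψ / Real.sqrt n < ‖E ω‖ then (E ω)⁻¹ else 0) - c⁻¹‖^(2*p) = _
          rw [if_neg hite, zero_sub, norm_neg, norm_inv]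
        rw [hFval]
        have hval : r⁻¹ ≤ 4/r^2 * ‖E ω - c‖ := by
          rw [inv_eq_one_div, show (4:ℝ)/r^2 * ‖E ω - c‖ = (4*‖E ω - c‖)/r^2 by ring,
            div_le_div_iff₀ hr0 (by positivity)]
          nlinarith
        calc (r⁻¹)^(2*p) ≤ (4/r^2 * ‖E ω - c‖)^(2*p) :=
              pow_le_pow_left₀ (by positivity) hval _
          _ = (4/r^2)^(2*p) * ‖E ω - c‖^(2*p) := mul_pow _ _ _
          _ ≤ _ := le_add_of_nonneg_right hterm2
    have hGm : Measurable (fun ω => ‖E ω - c‖) := (hEm.sub measurable_const).norm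
    have hint1 : Integrable (fun ω => ‖E ω - c‖^(2*p)) μ :=
      integrable_of_bdd (hGm.pow_const _).aestronglyMeasurable (C := 2^(2*p)) (fun ω => by
        rw [Real.norm_eq_abs, _root_.abs_of_nonneg (by positivity)]
        exact pow_le_pow_left₀ (norm_nonneg _) (hΔb ω) _)
    have hint2 : Integrable (fun ω => ‖E ω - c‖^(2*(2*p))) μ :=
      integrable_of_bdd (hGm.pow_const _).aestronglyMeasurable (C := 2^(2*(2*p))) (fun ω => by
        rw [Real.norm_eq_abs, _root_.abs_of_nonneg (by positivity)]
        exact pow_le_pow_left₀ (norm_nonneg _) (hΔb ω) _)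
    have hIF : ∫ ω, F ω ∂μ ≤ (4/r^2)^(2*p) * (∫ ω, ‖E ω - c‖^(2*p) ∂μ)
        + (4*Real.sqrt n/(κψ*r^2))^(2*p) * (∫ ω, ‖E ω - c‖^(2*(2*p)) ∂μ) := by
      calc ∫ ω, F ω ∂μ ≤ ∫ ω, ((4/r^2)^(2*p) * ‖E ω - c‖^(2*p)
            + (4*Real.sqrt n/(κψ*r^2))^(2*p) * ‖E ω - c‖^(2*(2*p))) ∂μ :=
          integral_mono hFint ((hint1.const_mul _).add (hint2.const_mul _)) hpt
        _ = _ := by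
            rw [integral_add (hint1.const_mul _) (hint2.const_mul _),
              integral_const_mul, integral_const_mul]
    have hm1 := hmom p hp
    have hm2 := hmom (2*p) (by omega)
    have hKb : (4/r^2)^(2*p) * (((2*p:ℕ):ℝ)^(2*p) * ((n:ℝ)^p)⁻¹)
        + (4*Real.sqrt n/(κψ*r^2))^(2*p) * (((2*(2*p):ℕ):ℝ)^(2*(2*p)) * ((n:ℝ)^(2*p))⁻¹)
        = K * b := by
      rw [hK, hb]
      rw [div_pow, div_pow, mul_pow (4:ℝ) (Real.sqrt n), mul_pow κψ (r^2),
        show Real.sqrt n ^(2*p) = ((Real.sqrt n)^2)^p from pow_mul _ 2 p, hsqn,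
        show (r^2)^(2*p) = r^(4*p) from by rw [← pow_mul]; ring_nf]
      have hrne : r ≠ 0 := hr0.ne'
      have hκne : κψ ≠ 0 := hκψ.ne'
      field_simp
      ring
    have hbmin : b ≤ max 1 A⁻¹ * min a b := by
      have h2 := le_max_mul_min (inv_pos.2 hA0) hb0 ha0 hba
      rwa [min_comm] at h2
    calc ∫ ω, F ω ∂μ
        ≤ (4/r^2)^(2*p) * (∫ ω, ‖E ω - c‖^(2*p) ∂μ)
          + (4*Real.sqrt n/(κψ*r^2))^(2*p) * (∫ ω, ‖E ω - c‖^(2*(2*p)) ∂μ) := hIF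
      _ ≤ (4/r^2)^(2*p) * (((2*p:ℕ):ℝ)^(2*p) * ((n:ℝ)^p)⁻¹)
          + (4*Real.sqrt n/(κψ*r^2))^(2*p) * (((2*(2*p):ℕ):ℝ)^(2*(2*p)) * ((n:ℝ)^(2*p))⁻¹) :=
          add_le_add (mul_le_mul_of_nonneg_left hm1 (by positivity))
            (mul_le_mul_of_nonneg_left hm2 (by positivity))
      _ = K * b := hKb
      _ ≤ K * (max 1 A⁻¹ * min a b) := mul_le_mul_of_nonneg_left hbmin hK0
      _ = (K * max 1 A⁻¹) * min a b := (mul_assoc _ _ _).symm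
      _ ≤ (3^(2*p) * max 1 A + K * max 1 A⁻¹) * min a b := by
          have h9 : (0:ℝ) ≤ 3^(2*p) * max 1 A := by positivity
          nlinarith [hmin0]
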